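/- arXiv:math/0405594 — 3 statements merged into one kernel-verified Lean document; each statement's English description precedes it below -/
import Mathlib

section
/- The arctanh numbers satisfy the recurrence θ(n+1,m) = θ(n,m-1) + n(n-1)·θ(n-1,m) for n ≥ 1, m ≥ 1, with θ(0,m) = [m=0] and θ(n,0) = [n=0]. -/
open PowerSeries Finset

noncomputable def lahN (n m : ℕ) : ℚ :=
  if 1 ≤ m ∧ m ≤ n then (n.factorial : ℚ) / (m.factorial : ℚ) * ((n - 1).choose (m - 1) : ℚ)
  else 0

def stirling1 : ℕ → ℕ → ℕ
  | 0, 0 => 1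
  | 0, _ + 1 => 0
  | _ + 1, 0 => 0
  | n + 1, m + 1 => n * stirling1 n (m + 1) + stirling1 n m

def stirling2 : ℕ → ℕ → ℕ
  | 0, 0 => 1
  | 0, _ + 1 => 0
  | _ + 1, 0 => 0
  | n + 1, m + 1 => (m + 1) * stirling2 n (m + 1) + stirling2 n m

noncomputable def tanhS : PowerSeries ℚ :=
  (PowerSeries.exp ℚ - PowerSeries.rescale (-1) (PowerSeries.exp ℚ)) *
    (PowerSeries.exp ℚ + PowerSeries.rescale (-1) (PowerSeries.exp ℚ))⁻¹

noncomputable def arctanhS : PowerSeries ℚ :=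
  PowerSeries.mk fun n => if n % 2 = 1 then (1 : ℚ) / n else 0

noncomputable def ThetaT (n m : ℕ) : ℚ :=
  (n.factorial : ℚ) / (m.factorial : ℚ) * PowerSeries.coeff n (tanhS ^ m)

noncomputable def thetaA (n m : ℕ) : ℚ :=
  (n.factorial : ℚ) / (m.factorial : ℚ) * PowerSeries.coeff n (arctanhS ^ m)

lemma arctanh_key : (1 - (PowerSeries.X : ℚ⟦X⟧) ^ 2) * (d⁄dX ℚ arctanhS) = 1 := by
  ext n
  rw [sub_mul, one_mul, map_sub, coeff_X_pow_mul']
  match n with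
  | 0 => simp [coeff_derivative, arctanhS]
  | 1 => simp [coeff_derivative, arctanhS]
  | (k+2) =>
    rw [if_pos (by omega : 2 ≤ k+2), coeff_derivative, coeff_derivative]
    simp only [arctanhS, coeff_mk, coeff_one, Nat.add_sub_cancel]
    rw [if_neg (by omega : ¬ k+2 = 0)]
    rcases Nat.even_or_odd k with h | h <;> [rw [Nat.even_iff] at h; rw [Nat.odd_iff] at h]
    · rw [if_pos (by omega), if_pos (by omega)]
      have h1 : ((k:ℚ)+2+1) ≠ 0 := by positivity
      have h2 : ((k:ℚ)+1) ≠ 0 := by positivity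
      push_cast
      field_simp
      norm_num
    · rw [if_neg (by omega), if_neg (by omega)]; ring

lemma arctanh_deriv_pow (m : ℕ) :
    (1 - (PowerSeries.X : ℚ⟦X⟧) ^ 2) * (d⁄dX ℚ (arctanhS ^ m)) =
      (m : ℚ) • arctanhS ^ (m - 1) := by
  rw [Derivation.leibniz_pow, smul_eq_mul, nsmul_eq_mul]
  calc (1 - (PowerSeries.X : ℚ⟦X⟧) ^ 2) * ((m : ℚ⟦X⟧) * (arctanhS ^ (m-1) * d⁄dX ℚ arctanhS))
      = (m : ℚ⟦X⟧) * arctanhS ^ (m-1) * ((1 - (PowerSeries.X : ℚ⟦X⟧) ^ 2) * d⁄dX ℚ arctanhS) := by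
        ring
    _ = (m : ℚ) • arctanhS ^ (m - 1) := by
        rw [arctanh_key, mul_one, ← map_natCast (PowerSeries.C (R := ℚ)) m, ← smul_eq_C_mul]

lemma arctanh_coeff_rec (m k : ℕ) :
    ((k : ℚ) + 2) * coeff (k + 2) (arctanhS ^ m) - (k : ℚ) * coeff k (arctanhS ^ m) =
      (m : ℚ) * coeff (k + 1) (arctanhS ^ (m - 1)) := by
  have h := congrArg (coeff (k + 1)) (arctanh_deriv_pow m)
  rw [map_smul, smul_eq_mul, sub_mul, one_mul, map_sub, coeff_X_pow_mul',
    coeff_derivative] at h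
  match k with
  | 0 => simp only [show ¬ 2 ≤ 0 + 1 by omega, if_false, sub_zero] at h
         push_cast at h ⊢; linarith [h]
  | (j+1) =>
    rw [if_pos (by omega : 2 ≤ j + 1 + 1), show j + 1 + 1 - 2 = j from rfl,
      coeff_derivative, show j + 1 + 1 + 1 = j + 1 + 2 by omega] at h
    push_cast at h ⊢
    linarith [h]

/-- Recurrence for the arctanh numbers:
θ(n+1,m) = θ(n,m-1) + n(n-1) θ(n-1,m) for n ≥ 1, m ≥ 1,
with θ(0,m) = [m=0] and θ(n,0) = [n=0]. -/
theorem arctanh_numbers_recurrence :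
    (∀ n m : ℕ, 1 ≤ n → 1 ≤ m →
      thetaA (n + 1) m = thetaA n (m - 1) + (n : ℚ) * ((n : ℚ) - 1) * thetaA (n - 1) m) ∧
    (∀ m : ℕ, thetaA 0 m = if m = 0 then 1 else 0) ∧
    (∀ n : ℕ, thetaA n 0 = if n = 0 then 1 else 0) := by
  refine ⟨?_, ?_, ?_⟩
  · rintro n m hn hm
    obtain ⟨k, rfl⟩ : ∃ k, n = k + 1 := ⟨n - 1, by omega⟩
    obtain ⟨m', rfl⟩ : ∃ m', m = m' + 1 := ⟨m - 1, by omega⟩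
    have hL := arctanh_coeff_rec (m' + 1) k
    simp only [Nat.add_sub_cancel] at hL ⊢
    set c2 := coeff (k + 2) (arctanhS ^ (m' + 1)) with hc2
    set c0 := coeff k (arctanhS ^ (m' + 1)) with hc0
    set d := coeff (k + 1) (arctanhS ^ m') with hd
    simp only [thetaA, show k + 1 + 1 = k + 2 from rfl, ← hc2, ← hc0, ← hd]
    have hkf : ((k.factorial : ℚ)) ≠ 0 := Nat.cast_ne_zero.mpr k.factorial_ne_zero
    have hmf : ((m'.factorial : ℚ)) ≠ 0 := Nat.cast_ne_zero.mpr m'.factorial_ne_zero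
    rw [show (k+2).factorial = (k+2)*((k+1)*k.factorial) by
          rw [Nat.factorial_succ, Nat.factorial_succ],
        Nat.factorial_succ k, Nat.factorial_succ m']
    push_cast
    push_cast at hL
    field_simp
    linear_combination hL
  · intro m
    simp only [thetaA, coeff_zero_eq_constantCoeff, map_pow]
    have h0 : constantCoeff arctanhS = 0 := by
      simp [arctanhS, ← coeff_zero_eq_constantCoeff]
    rw [h0]
    rcases m with _ | m
    · simp
    · simp [zero_pow]
  · intro n
    simp only [thetaA, pow_zero, coeff_one, Nat.factorial_zero]
    rcases n with _ | n
    · simp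
    · simp
end

section
/- For all n ≥ 1 and 0 ≤ k ≤ n, θ(n, n-k) = ∑_{i=0}^{k} i!·C(n,i)·C(n-1,i)·(-2)^{k-i}·c(n-i, n-k), where c denotes the unsigned Stirling numbers of the first kind. -/
open PowerSeries Finset

/-! ### Auxiliary lemmas -/

lemma stirling1_succ (n m : ℕ) :
    stirling1 (n+1) (m+1) = n * stirling1 n (m + 1) + stirling1 n m := rfl

lemma stirling1_eq_zero {a b : ℕ} (h : a < b) : stirling1 a b = 0 := by
  induction a generalizing b with
  | zero => cases b with | zero => omega | succ b => rfl
  | succ a ih =>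
    cases b with
    | zero => omega
    | succ b => simp [stirling1, ih (show a < b + 1 by omega), ih (show a < b by omega)]

lemma stirling1_self (m : ℕ) : stirling1 m m = 1 := by
  induction m with
  | zero => rfl
  | succ m ih =>
    show m * stirling1 m (m + 1) + stirling1 m m = 1
    rw [stirling1_eq_zero (by omega), ih]; ring

lemma two_stirling1_succ (m : ℕ) : 2 * stirling1 (m+1) m = m * (m+1) := by
  induction m with
  | zero => rfl
  | succ m ih =>
    show 2 * ((m+1) * stirling1 (m+1) (m+1) + stirling1 (m+1) m) = _
    rw [stirling1_self]
    rw [Nat.mul_add, ih]; ring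

lemma coeff_deriv_arctanhS (n : ℕ) :
    coeff n (d⁄dX ℚ arctanhS) = if n % 2 = 0 then 1 else 0 := by
  rw [coeff_derivative]
  simp only [arctanhS, coeff_mk]
  rcases Nat.even_or_odd n with h | h
  · rw [Nat.even_iff] at h
    have h1 : (n+1) % 2 = 1 := by omega
    have h2 : n % 2 = 0 := h
    have : ((n:ℚ)+1) ≠ 0 := by positivity
    simp [h1, h2]
    field_simp
  · rw [Nat.odd_iff] at h
    have h1 : (n+1) % 2 = 0 := by omega
    have h2 : ¬ (n % 2 = 0) := by omega
    simp [h1, h2]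

lemma one_sub_X_sq_mul_deriv :
    (1 - X ^ 2 : PowerSeries ℚ) * d⁄dX ℚ arctanhS = 1 := by
  ext n
  rw [sub_mul, one_mul, map_sub]
  rcases n with _ | _ | n
  · simp [coeff_deriv_arctanhS]
  · simp [coeff_deriv_arctanhS, coeff_X_pow_mul']
  · rw [show n + 1 + 1 = n + 2 by ring, coeff_X_pow_mul _ 2 n]
    rw [coeff_deriv_arctanhS, coeff_deriv_arctanhS]
    have h2 : (n + 2) % 2 = n % 2 := by omega
    rw [h2, sub_self, coeff_one, if_neg (Nat.succ_ne_zero _)]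

lemma constantCoeff_arctanhS : constantCoeff arctanhS = 0 := by
  rw [← coeff_zero_eq_constantCoeff_apply]
  simp [arctanhS]

lemma coeff_one_arctanhS : coeff 1 arctanhS = 1 := by simp [arctanhS]

lemma coeff_arctanhS_pow_eq_zero {a b : ℕ} (h : a < b) :
    coeff a (arctanhS ^ b) = 0 := by
  have hdvd : (X : PowerSeries ℚ) ^ b ∣ arctanhS ^ b :=
    pow_dvd_pow_of_dvd (X_dvd_iff.mpr constantCoeff_arctanhS) b
  exact (X_pow_dvd_iff.mp hdvd) a h

lemma thetaA_eq_zero {a b : ℕ} (h : a < b) : thetaA a b = 0 := by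
  simp [thetaA, coeff_arctanhS_pow_eq_zero h]

lemma key (m j : ℕ) : ((j:ℚ)+2) * coeff (j+2) (arctanhS^(m+1))
    = ((m:ℚ)+1) * coeff (j+1) (arctanhS^m) + (j:ℚ) * coeff j (arctanhS^(m+1)) := by
  have hD : d⁄dX ℚ (arctanhS^(m+1)) = (m+1) • (arctanhS^m * d⁄dX ℚ arctanhS) := by
    rw [Derivation.leibniz_pow]
    simp [smul_eq_mul]
  have h2 : (1 - X^2 : PowerSeries ℚ) * d⁄dX ℚ (arctanhS^(m+1)) = (m+1) • arctanhS^m := by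
    rw [hD, mul_smul_comm]
    rw [show (1 - X^2 : PowerSeries ℚ) * (arctanhS^m * d⁄dX ℚ arctanhS)
        = arctanhS^m * ((1 - X^2) * d⁄dX ℚ arctanhS) by ring]
    rw [one_sub_X_sq_mul_deriv, mul_one]
  have h3 := congrArg (coeff (j+1)) h2
  rw [sub_mul, one_mul, map_sub, map_nsmul, nsmul_eq_mul] at h3
  rw [coeff_derivative] at h3
  cases j with
  | zero =>
    rw [coeff_X_pow_mul' _ 2 1, if_neg (by omega)] at h3
    push_cast
    push_cast at h3
    linarith
  | succ i =>
    rw [show i + 1 + 1 = i + 2 by ring, coeff_X_pow_mul _ 2 i, coeff_derivative] at h3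
    rw [show i + 1 + 1 = i + 2 by omega]
    push_cast
    push_cast at h3
    linarith

lemma theta_rec (m j : ℕ) :
    thetaA (j+2) (m+1) = thetaA (j+1) m + ((j:ℚ)+1)*(j:ℚ)*thetaA j (m+1) := by
  have hk := key m j
  simp only [thetaA]
  have f1 : ((j+2).factorial : ℚ) = ((j:ℚ)+2)*((j:ℚ)+1)*(j.factorial : ℚ) := by
    rw [show j + 2 = (j+1)+1 by ring, Nat.factorial_succ, Nat.factorial_succ]
    push_cast; ring
  have f2 : ((j+1).factorial : ℚ) = ((j:ℚ)+1)*(j.factorial : ℚ) := by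
    rw [Nat.factorial_succ]; push_cast; ring
  have f3 : ((m+1).factorial : ℚ) = ((m:ℚ)+1)*(m.factorial : ℚ) := by
    rw [Nat.factorial_succ]; push_cast; ring
  have hj : (j.factorial : ℚ) ≠ 0 := Nat.cast_ne_zero.mpr (Nat.factorial_ne_zero j)
  have hm : (m.factorial : ℚ) ≠ 0 := Nat.cast_ne_zero.mpr (Nat.factorial_ne_zero m)
  have hm1 : ((m:ℚ)+1) ≠ 0 := by positivity
  have hj2 : ((j:ℚ)+2) ≠ 0 := by positivity
  have e : coeff (j+2) (arctanhS^(m+1))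
      = (((m:ℚ)+1) * coeff (j+1) (arctanhS^m) + (j:ℚ) * coeff j (arctanhS^(m+1)))/((j:ℚ)+2) := by
    rw [eq_div_iff hj2]
    linarith [hk]
  rw [e, f1, f2, f3]
  field_simp

lemma star (m j : ℕ) (hj : j ≤ m) :
    ((j+2).factorial : ℚ) * ((m+3).choose (j+2) : ℚ) * ((m+2).choose (j+2) : ℚ)
      = ((j+2).factorial : ℚ) * ((m+2).choose (j+2) : ℚ) * ((m+1).choose (j+2) : ℚ)
        + 2 * ((m+1-j : ℕ) : ℚ) *
            (((j+1).factorial : ℚ) * ((m+2).choose (j+1) : ℚ) * ((m+1).choose (j+1) : ℚ))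
        + ((m:ℚ)+2) * ((m:ℚ)+1) *
            ((j.factorial : ℚ) * ((m+1).choose j : ℚ) * ((m:ℕ).choose j : ℚ)) := by
  have e1 : ((m+1-j : ℕ) : ℚ) = (m:ℚ)+1-(j:ℚ) := by
    rw [Nat.cast_sub (by omega)]; push_cast; ring
  have e2 : ((m-j : ℕ) : ℚ) = (m:ℚ)-(j:ℚ) := by
    rw [Nat.cast_sub hj]
  have h1Q : ((m+3).choose (j+2) : ℚ) = ((m+2).choose (j+1) : ℚ) + ((m+2).choose (j+2) : ℚ) := by
    exact_mod_cast congrArg (Nat.cast (R := ℚ)) (Nat.choose_succ_succ (m+2) (j+1))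
  have h2Q : ((m+2).choose (j+2) : ℚ) = ((m+1).choose (j+1) : ℚ) + ((m+1).choose (j+2) : ℚ) := by
    exact_mod_cast congrArg (Nat.cast (R := ℚ)) (Nat.choose_succ_succ (m+1) (j+1))
  have h3Q : ((m+2).choose (j+2) : ℚ) * ((j:ℚ)+2) = ((m+2).choose (j+1) : ℚ) * ((m:ℚ)+1-(j:ℚ)) := by
    have h := Nat.choose_succ_right_eq (m+2) (j+1)
    rw [show m + 2 - (j+1) = m+1-j by omega] at h
    have := congrArg (Nat.cast (R := ℚ)) h
    push_cast [-Nat.cast_sub] at this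
    rw [e1] at this
    convert this using 2 <;> push_cast <;> ring
  have h4Q : ((m+1).choose (j+2) : ℚ) * ((j:ℚ)+2) = ((m+1).choose (j+1) : ℚ) * ((m:ℚ)-(j:ℚ)) := by
    have h := Nat.choose_succ_right_eq (m+1) (j+1)
    rw [show m + 1 - (j+1) = m-j by omega] at h
    have := congrArg (Nat.cast (R := ℚ)) h
    push_cast [-Nat.cast_sub] at this
    rw [e2] at this
    convert this using 2 <;> push_cast <;> ring
  have h5Q : ((m:ℚ)+2) * ((m+1).choose j : ℚ) = ((m+2).choose (j+1) : ℚ) * ((j:ℚ)+1) := by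
    have := congrArg (Nat.cast (R := ℚ)) (Nat.add_one_mul_choose_eq (m+1) j)
    push_cast at this
    convert this using 2 <;> push_cast <;> ring
  have h6Q : ((m:ℚ)+1) * ((m:ℕ).choose j : ℚ) = ((m+1).choose (j+1) : ℚ) * ((j:ℚ)+1) := by
    have := congrArg (Nat.cast (R := ℚ)) (Nat.add_one_mul_choose_eq m j)
    push_cast at this
    convert this using 2 <;> push_cast <;> ring
  have fj2 : ((j+2).factorial : ℚ) = ((j:ℚ)+2)*((j:ℚ)+1)*(j.factorial : ℚ) := by
    rw [show j+2 = (j+1)+1 by ring, Nat.factorial_succ, Nat.factorial_succ]; push_cast; ring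
  have fj1 : ((j+1).factorial : ℚ) = ((j:ℚ)+1)*(j.factorial : ℚ) := by
    rw [Nat.factorial_succ]; push_cast; ring
  rw [e1, fj2, fj1]
  set F := (j.factorial : ℚ)
  set P2 := ((m+2).choose (j+2) : ℚ)
  set P1 := ((m+2).choose (j+1) : ℚ)
  set Q2 := ((m+1).choose (j+2) : ℚ)
  set Q1 := ((m+1).choose (j+1) : ℚ)
  set Q0 := ((m+1).choose j : ℚ)
  set R0 := ((m:ℕ).choose j : ℚ)
  linear_combination (F*((j:ℚ)+2)*((j:ℚ)+1)*P2) * h1Q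
    + (F*((j:ℚ)+1)*((j:ℚ)+2)*(P2+P1)) * h2Q
    + (F*((j:ℚ)+1)*Q1) * h3Q + (F*((j:ℚ)+1)*P1) * h4Q
    + (F*((m:ℚ)+1)*R0) * h5Q + (F*((j:ℚ)+1)*P1) * h6Q
    + (-2*F*((j:ℚ)+1)*Q1) * h5Q + (-2*F*((m:ℚ)+2)*Q0) * h6Q

lemma Srec (q j : ℕ) (hjq : j ≤ q) :
    ∑ i ∈ range (j+3), (i.factorial : ℚ) * ((q+3).choose i : ℚ) * ((q+2).choose i : ℚ) *
        (-2:ℚ)^(j+2-i) * (stirling1 (q+3-i) (q+1-j) : ℚ)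
      = (∑ i ∈ range (j+3), (i.factorial : ℚ) * ((q+2).choose i : ℚ) * ((q+1).choose i : ℚ) *
          (-2:ℚ)^(j+2-i) * (stirling1 (q+2-i) (q-j) : ℚ))
        + ((q:ℚ)+2)*((q:ℚ)+1) *
          ∑ i ∈ range (j+1), (i.factorial : ℚ) * ((q+1).choose i : ℚ) * ((q:ℕ).choose i : ℚ) *
            (-2:ℚ)^(j-i) * (stirling1 (q+1-i) (q+1-j) : ℚ) := by
  have hmid : ∀ i ∈ range (j+3),
      (i.factorial : ℚ) * ((q+2).choose i : ℚ) * ((q+1).choose i : ℚ) *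
          (-2:ℚ)^(j+2-i) * (stirling1 (q+2-i) (q-j) : ℚ)
        = (i.factorial : ℚ) * ((q+2).choose i : ℚ) * ((q+1).choose i : ℚ) *
            (-2:ℚ)^(j+2-i) * (stirling1 (q+3-i) (q+1-j) : ℚ)
          - (i.factorial : ℚ) * ((q+2).choose i : ℚ) * ((q+1).choose i : ℚ) *
            (-2:ℚ)^(j+2-i) * ((q+2-i : ℕ) : ℚ) * (stirling1 (q+2-i) (q+1-j) : ℚ) := by
    intro i hi
    simp only [mem_range] at hi
    rcases Nat.lt_or_ge i (q+3) with hlt | hge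
    · have e1 : q+3-i = (q+2-i)+1 := by omega
      have e2 : q+1-j = (q-j)+1 := by omega
      have : (stirling1 (q+3-i) (q+1-j) : ℚ)
          = ((q+2-i : ℕ) : ℚ) * (stirling1 (q+2-i) (q+1-j) : ℚ) + (stirling1 (q+2-i) (q-j) : ℚ) := by
        rw [e1, e2, stirling1_succ]; push_cast; ring
      rw [this]; ring
    · omega
  rw [Finset.sum_congr rfl hmid, Finset.sum_sub_distrib]
  have hre : ∑ i ∈ range (j+3), (i.factorial : ℚ) * ((q+2).choose i : ℚ) * ((q+1).choose i : ℚ) *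
          (-2:ℚ)^(j+2-i) * ((q+2-i : ℕ) : ℚ) * (stirling1 (q+2-i) (q+1-j) : ℚ)
      = ∑ i ∈ range (j+3), (if i = 0 then 0 else
          ((i-1).factorial : ℚ) * ((q+2).choose (i-1) : ℚ) * ((q+1).choose (i-1) : ℚ) *
          (-2:ℚ)^(j+3-i) * ((q+3-i : ℕ) : ℚ) * (stirling1 (q+3-i) (q+1-j) : ℚ)) := by
    have h1 := Finset.sum_range_succ' (fun i => (if i = 0 then 0 else
          ((i-1).factorial : ℚ) * ((q+2).choose (i-1) : ℚ) * ((q+1).choose (i-1) : ℚ) *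
          (-2:ℚ)^(j+3-i) * ((q+3-i : ℕ) : ℚ) * (stirling1 (q+3-i) (q+1-j) : ℚ))) (j+3)
    rw [Finset.sum_range_succ] at h1
    have hzero : (if j+3 = 0 then (0:ℚ) else
          ((j+3-1).factorial : ℚ) * ((q+2).choose (j+3-1) : ℚ) * ((q+1).choose (j+3-1) : ℚ) *
          (-2:ℚ)^(j+3-(j+3)) * ((q+3-(j+3) : ℕ) : ℚ) * (stirling1 (q+3-(j+3)) (q+1-j) : ℚ)) = 0 := by
      rw [if_neg (by omega)]
      rw [stirling1_eq_zero (show q+3-(j+3) < q+1-j by omega)]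
      push_cast; ring
    rw [hzero] at h1
    have hstep : ∀ i ∈ range (j+3), (if i + 1 = 0 then (0:ℚ) else
          ((i+1-1).factorial : ℚ) * ((q+2).choose (i+1-1) : ℚ) * ((q+1).choose (i+1-1) : ℚ) *
          (-2:ℚ)^(j+3-(i+1)) * ((q+3-(i+1) : ℕ) : ℚ) * (stirling1 (q+3-(i+1)) (q+1-j) : ℚ))
        = (i.factorial : ℚ) * ((q+2).choose i : ℚ) * ((q+1).choose i : ℚ) *
          (-2:ℚ)^(j+2-i) * ((q+2-i : ℕ) : ℚ) * (stirling1 (q+2-i) (q+1-j) : ℚ) := by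
      intro i hi
      rw [if_neg (by omega)]
      rw [show i+1-1 = i by omega, show j+3-(i+1) = j+2-i by omega, show q+3-(i+1) = q+2-i by omega]
    rw [Finset.sum_congr rfl hstep] at h1
    rw [if_pos rfl, add_zero] at h1
    linarith [h1]
  rw [hre]
  have hth : ((q:ℚ)+2)*((q:ℚ)+1) *
          ∑ i ∈ range (j+1), (i.factorial : ℚ) * ((q+1).choose i : ℚ) * ((q:ℕ).choose i : ℚ) *
            (-2:ℚ)^(j-i) * (stirling1 (q+1-i) (q+1-j) : ℚ)
      = ∑ i ∈ range (j+3), (if i < 2 then 0 else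
          ((q:ℚ)+2)*((q:ℚ)+1) * (((i-2).factorial : ℚ) * ((q+1).choose (i-2) : ℚ) * ((q:ℕ).choose (i-2) : ℚ) *
            (-2:ℚ)^(j+2-i) * (stirling1 (q+3-i) (q+1-j) : ℚ))) := by
    rw [Finset.mul_sum]
    rw [show j+3 = (j+2)+1 by omega, Finset.sum_range_succ' _ (j+2)]
    rw [show j+2 = (j+1)+1 by omega, Finset.sum_range_succ' _ (j+1)]
    rw [if_pos (by omega), if_pos (by omega), add_zero, add_zero]
    apply Finset.sum_congr rfl
    intro i hi
    simp only [mem_range] at hi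
    rw [if_neg (by omega)]
    rw [show i+1+1-2 = i by omega, show j+2-(i+1+1) = j-i by omega, show q+3-(i+1+1) = q+1-i by omega]
  rw [hth]
  rw [← Finset.sum_sub_distrib, ← Finset.sum_add_distrib]
  apply Finset.sum_congr rfl
  intro i hi
  simp only [mem_range] at hi
  match i with
  | 0 => norm_num
  | 1 =>
    rw [if_neg (by omega), if_pos (by omega)]
    rw [show j+2-1 = j+1 by omega, show j+3-1 = j+2 by omega]
    have hpow : (-2:ℚ)^(j+2) = (-2) * (-2:ℚ)^(j+1) := by
      rw [show j+2 = (j+1)+1 by omega, pow_succ]; ring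
    rw [hpow]
    simp [Nat.choose_one_right, Nat.factorial]
    ring
  | (i'+2) =>
    rw [if_neg (by omega), if_neg (by omega)]
    rw [show i'+2-1 = i'+1 by omega, show i'+2-2 = i' by omega,
        show j+3-(i'+2) = j+1-i' by omega]
    have hs := star q i' (by omega)
    have hq1 : q+3-(i'+2) = q+1-i' := by omega
    have hq2 : q+2-(i'+2) = q-i' := by omega
    have hpow : (-2:ℚ)^(j+1-i') = (-2) * (-2:ℚ)^(j+2-(i'+2)) := by
      rw [show j+1-i' = (j+2-(i'+2))+1 by omega, pow_succ]; ring
    rw [hq1, hpow]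
    set c := (stirling1 (q+1-i') (q+1-j) : ℚ)
    set e := (-2:ℚ)^(j+2-(i'+2))
    have hsub : ((q+1-i' : ℕ) : ℚ) = (q:ℚ)+1-(i':ℚ) := by
      rw [Nat.cast_sub (by omega)]; push_cast; ring
    rw [hsub]
    rw [hsub] at hs
    linear_combination e * c * hs

lemma Sone (a : ℕ) (ha : 1 ≤ a) :
    ∑ i ∈ range (1+1), (i.factorial : ℚ) * (a.choose i : ℚ) * ((a-1).choose i : ℚ) *
        (-2:ℚ)^(1-i) * (stirling1 (a-i) (a-1) : ℚ) = 0 := by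
  obtain ⟨b, rfl⟩ : ∃ b, a = b + 1 := ⟨a - 1, by omega⟩
  rw [Finset.sum_range_succ, Finset.sum_range_one]
  rw [show b+1-1 = b by omega, show b+1-0 = b+1 by omega]
  have h2s : (2:ℚ) * ((stirling1 (b+1) b : ℕ) : ℚ) = (b:ℚ) * ((b:ℚ)+1) := by
    exact_mod_cast congrArg (Nat.cast (R := ℚ)) (two_stirling1_succ b)
  simp [Nat.choose_one_right, Nat.factorial, stirling1_self]
  push_cast
  linarith [h2s]

/-- θ(n, n-k) = ∑_{i=0}^{k} i! C(n,i) C(n-1,i) (-2)^{k-i} c(n-i, n-k) for n ≥ 1, 0 ≤ k ≤ n. -/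
theorem arctanh_numbers_as_stirling_sums (n k : ℕ) (hn : 1 ≤ n) (hk : k ≤ n) :
    thetaA n (n - k) =
      ∑ i ∈ Finset.range (k + 1),
        (i.factorial : ℚ) * (n.choose i : ℚ) * ((n - 1).choose i : ℚ) *
          (-2 : ℚ) ^ (k - i) * (stirling1 (n - i) (n - k) : ℚ) := by
  induction n using Nat.strong_induction_on generalizing k with
  | _ n IH =>
  rcases eq_or_lt_of_le hk with rfl | hkn
  · -- k = n : both sides are zero
    rw [Nat.sub_self]
    have hL : thetaA k 0 = 0 := by
      simp only [thetaA, pow_zero, PowerSeries.coeff_one]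
      rw [if_neg (by omega)]
      ring
    rw [hL]
    symm
    apply Finset.sum_eq_zero
    intro i hi
    simp only [mem_range] at hi
    rcases Nat.lt_or_ge i k with hik | hik
    · have : k - i = (k-i-1)+1 := by omega
      rw [this]
      rw [show stirling1 (k-i-1+1) 0 = 0 from rfl]
      push_cast; ring
    · have hik' : i = k := by omega
      subst hik'
      rw [Nat.choose_eq_zero_of_lt (show i - 1 < i by omega)]
      push_cast; ring
  · rcases Nat.lt_or_ge n 2 with h1 | h2
    · -- n = 1, k = 0
      have hn1 : n = 1 := by omega
      have hk0 : k = 0 := by omega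
      subst hn1; subst hk0
      rw [Finset.sum_range_one]
      norm_num [thetaA, stirling1_self, pow_one, coeff_one_arctanhS]
    · rcases Nat.lt_or_ge k 2 with hk1 | hk2
      · -- k ≤ 1
        obtain ⟨p, rfl⟩ : ∃ p, n = p + 2 := ⟨n - 2, by omega⟩
        have hrec := theta_rec (p+1-k) p
        rw [show (p+1-k)+1 = p+2-k by omega] at hrec
        have hz : thetaA p (p+2-k) = 0 := thetaA_eq_zero (by omega)
        rw [hz, mul_zero, add_zero] at hrec
        rw [hrec]
        have hIH := IH (p+1) (by omega) k (by omega) (by omega)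
        rw [hIH]
        interval_cases k
        · rw [Finset.sum_range_one, Finset.sum_range_one]
          rw [show p+1-0 = p+1 by omega, show p+2-0 = p+2 by omega]
          simp [stirling1_self]
        · exact (Sone (p+1) (by omega)).trans (Sone (p+2) (by omega)).symm
      · -- k ≥ 2
        obtain ⟨j, rfl⟩ : ∃ j, k = j + 2 := ⟨k - 2, by omega⟩
        obtain ⟨q, rfl⟩ : ∃ q, n = q + 3 := ⟨n - 3, by omega⟩
        have hjq : j ≤ q := by omega
        rw [show q+3-(j+2) = q+1-j by omega, show q+3-1 = q+2 by omega,
            show j+2+1 = j+3 by omega]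
        rw [Srec q j hjq]
        have hrec := theta_rec (q-j) (q+1)
        rw [show q+1+2 = q+3 by omega, show (q-j)+1 = q+1-j by omega] at hrec
        rw [hrec]
        have hIH1 := IH (q+2) (by omega) (j+2) (by omega) (by omega)
        rw [show q+2-(j+2) = q-j by omega, show q+2-1 = q+1 by omega,
            show j+2+1 = j+3 by omega] at hIH1
        rw [hIH1]
        have hIH2 := IH (q+1) (by omega) j (by omega) (by omega)
        rw [show q+1-1 = q by omega] at hIH2
        rw [hIH2]
        push_cast
        ring
end

section
/- For every odd n ≥ 1, ∑_{i=1}^{n} (-1)^{i-1}·i!·2^{n-i}·S(n,i) = (-1)^{(n-1)/2}·T_n, where T_n is the n-th tangent number; for every even n ≥ 2, ∑_{i=1}^{n} (-1)^{i-1}·i!·2^{n-i}·S(n,i) = 0. -/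
open PowerSeries Finset

/-- The tangent numbers, via (-1)^{(n-1)/2} T_n = Θ(n,1), i.e. tanh u = ∑_n Θ(n,1) u^n/n!. -/
noncomputable def tangentNumber (n : ℕ) : ℚ := (-1 : ℚ) ^ ((n - 1) / 2) * ThetaT n 1

/-! ### Auxiliary development -/

/-- `B = e^u - 1`. -/
noncomputable def LB : PowerSeries ℚ := PowerSeries.exp ℚ - 1

/-- `A = e^{2u} - 1`. -/
noncomputable def LA : PowerSeries ℚ := PowerSeries.rescale 2 LB

noncomputable def laa (i : ℕ) : ℚ := -(-1/2 : ℚ)^i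

noncomputable def LG (n : ℕ) : PowerSeries ℚ :=
  ∑ i ∈ Finset.Icc 1 n, PowerSeries.C (laa i) * LA ^ i

lemma L_derivative_exp : d⁄dX ℚ (PowerSeries.exp ℚ) = PowerSeries.exp ℚ := by
  ext n
  simp [PowerSeries.coeff_derivative, PowerSeries.coeff_exp, Nat.factorial_succ]
  field_simp

lemma constantCoeff_LB : constantCoeff LB = 0 := by
  simp [LB, PowerSeries.constantCoeff_exp]

lemma derivative_LB_pow (i : ℕ) :
    d⁄dX ℚ (LB ^ (i+1)) = ((i:ℚ)+1) • (LB ^ (i+1) + LB ^ i) := by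
  have h1 : d⁄dX ℚ LB = LB + 1 := by
    simp [LB, L_derivative_exp]
  rw [Derivation.leibniz_pow, h1, smul_eq_mul, Nat.add_sub_cancel,
    ← Nat.cast_smul_eq_nsmul ℚ, show LB ^ i * (LB + 1) = LB ^ (i+1) + LB ^ i by ring]
  push_cast
  rfl

lemma coeff_LB_pow (n i : ℕ) :
    (n.factorial : ℚ) * PowerSeries.coeff n (LB ^ i) = stirling2 n i * i.factorial := by
  induction n generalizing i with
  | zero =>
    rw [PowerSeries.coeff_zero_eq_constantCoeff, map_pow, constantCoeff_LB]
    cases i <;> simp [stirling2]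
  | succ n ih =>
    cases i with
    | zero => simp [stirling2, PowerSeries.coeff_one]
    | succ j =>
      have hd : PowerSeries.coeff n (d⁄dX ℚ (LB ^ (j+1))) =
          PowerSeries.coeff (n+1) (LB ^ (j+1)) * (n+1) := PowerSeries.coeff_derivative _ n
      rw [derivative_LB_pow] at hd
      have heq : ((n+1).factorial : ℚ) * PowerSeries.coeff (n+1) (LB ^ (j+1)) =
          (n.factorial : ℚ) * (PowerSeries.coeff (n+1) (LB ^ (j+1)) * (n+1)) := by
        rw [Nat.factorial_succ]; push_cast; ring
      rw [heq, ← hd]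
      simp only [map_smul, map_add, smul_eq_mul]
      rw [show (stirling2 (n+1) (j+1) : ℚ)
          = (((j+1) * stirling2 n (j+1) + stirling2 n j : ℕ) : ℚ) by rfl]
      have h1 := ih (j+1)
      have h2 := ih j
      rw [Nat.factorial_succ j] at h1 ⊢
      push_cast at h1 h2 ⊢
      linear_combination ((j:ℚ)+1)*h1 + ((j:ℚ)+1)*h2

lemma L_exp_neg_mul :
    PowerSeries.exp ℚ * PowerSeries.rescale (-1) (PowerSeries.exp ℚ) = 1 :=
  PowerSeries.exp_mul_exp_neg_eq_one

lemma LA_eq : LA = PowerSeries.exp ℚ ^ 2 - 1 := by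
  rw [LA, LB, map_sub, map_one, PowerSeries.exp_pow_eq_rescale_exp]
  norm_num

lemma constantCoeff_LA : constantCoeff LA = 0 := by
  rw [LA, ← PowerSeries.coeff_zero_eq_constantCoeff_apply, PowerSeries.coeff_rescale]
  simp [constantCoeff_LB]

lemma constantCoeff_den :
    constantCoeff (PowerSeries.exp ℚ + PowerSeries.rescale (-1) (PowerSeries.exp ℚ)) = 2 := by
  rw [map_add, ← PowerSeries.coeff_zero_eq_constantCoeff_apply,
    ← PowerSeries.coeff_zero_eq_constantCoeff_apply]
  simp [PowerSeries.coeff_rescale, PowerSeries.coeff_exp]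
  norm_num

lemma tanhS_mul : tanhS * (LA + 2) = LA := by
  have hden : constantCoeff
      (PowerSeries.exp ℚ + PowerSeries.rescale (-1) (PowerSeries.exp ℚ)) ≠ 0 := by
    rw [constantCoeff_den]; norm_num
  have h2 : LA + 2 = (PowerSeries.exp ℚ + PowerSeries.rescale (-1) (PowerSeries.exp ℚ)) *
      PowerSeries.exp ℚ := by
    rw [LA_eq]; ring_nf
    rw [L_exp_neg_mul]
  have h3 : LA = (PowerSeries.exp ℚ - PowerSeries.rescale (-1) (PowerSeries.exp ℚ)) *
      PowerSeries.exp ℚ := by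
    rw [LA_eq]; ring_nf
    rw [L_exp_neg_mul]
  rw [tanhS, h2, h3]
  rw [show (PowerSeries.exp ℚ - PowerSeries.rescale (-1) (PowerSeries.exp ℚ)) *
      (PowerSeries.exp ℚ + PowerSeries.rescale (-1) (PowerSeries.exp ℚ))⁻¹ *
      ((PowerSeries.exp ℚ + PowerSeries.rescale (-1) (PowerSeries.exp ℚ)) * PowerSeries.exp ℚ) =
      (PowerSeries.exp ℚ - PowerSeries.rescale (-1) (PowerSeries.exp ℚ)) * PowerSeries.exp ℚ *
      ((PowerSeries.exp ℚ + PowerSeries.rescale (-1) (PowerSeries.exp ℚ))⁻¹ *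
       (PowerSeries.exp ℚ + PowerSeries.rescale (-1) (PowerSeries.exp ℚ))) by ring]
  rw [mul_comm ((PowerSeries.exp ℚ + PowerSeries.rescale (-1) (PowerSeries.exp ℚ))⁻¹),
    PowerSeries.mul_inv_cancel _ hden, mul_one]

lemma tanhS_odd : PowerSeries.rescale (-1 : ℚ) tanhS = -tanhS := by
  have hden : constantCoeff
      (PowerSeries.exp ℚ + PowerSeries.rescale (-1) (PowerSeries.exp ℚ)) ≠ 0 := by
    rw [constantCoeff_den]; norm_num
  set D := PowerSeries.exp ℚ + PowerSeries.rescale (-1) (PowerSeries.exp ℚ) with hD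
  have hrr : PowerSeries.rescale (-1 : ℚ) (PowerSeries.rescale (-1 : ℚ) (PowerSeries.exp ℚ)) =
      PowerSeries.exp ℚ := by
    rw [PowerSeries.rescale_rescale]
    norm_num [PowerSeries.rescale_one]
  have hDfix : PowerSeries.rescale (-1 : ℚ) D = D := by
    rw [hD, map_add, hrr, add_comm]
  have hinv : PowerSeries.rescale (-1 : ℚ) D⁻¹ = D⁻¹ := by
    have h1 : PowerSeries.rescale (-1 : ℚ) D⁻¹ * D = 1 := by
      calc PowerSeries.rescale (-1 : ℚ) D⁻¹ * D
          = PowerSeries.rescale (-1 : ℚ) D⁻¹ * PowerSeries.rescale (-1 : ℚ) D := by rw [hDfix]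
        _ = PowerSeries.rescale (-1 : ℚ) (D⁻¹ * D) := by rw [map_mul]
        _ = 1 := by rw [mul_comm, PowerSeries.mul_inv_cancel _ hden, map_one]
    exact (PowerSeries.eq_inv_iff_mul_eq_one hden).2 h1
  rw [tanhS, map_mul, hinv, map_sub, hrr]
  ring

lemma L_tele (n : ℕ) : (LA + 2) * LG n = LA + PowerSeries.C (laa n) * LA ^ (n+1) := by
  induction n with
  | zero =>
    simp only [LG, Finset.Icc_eq_empty_of_lt Nat.zero_lt_one, Finset.sum_empty, mul_zero]
    rw [show laa 0 = -1 by norm_num [laa], map_neg, map_one, pow_one]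
    ring
  | succ n ih =>
    rw [LG, Finset.sum_Icc_succ_top (Nat.one_le_iff_ne_zero.2 (Nat.succ_ne_zero n)), ← LG,
      mul_add, ih]
    have key : PowerSeries.C (laa n) + 2 * PowerSeries.C (laa (n+1)) = 0 := by
      rw [(map_ofNat (PowerSeries.C (R := ℚ)) 2).symm, ← map_mul, ← map_add,
        show laa n + 2 * laa (n+1) = 0 by simp only [laa, pow_succ]; ring, map_zero]
    have expand : LA + PowerSeries.C (laa n) * LA ^ (n + 1) +
        (LA + 2) * (PowerSeries.C (laa (n+1)) * LA ^ (n + 1)) =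
        LA + PowerSeries.C (laa (n+1)) * LA ^ (n + 1 + 1) +
        (PowerSeries.C (laa n) + 2 * PowerSeries.C (laa (n+1))) * LA ^ (n+1) := by ring
    rw [expand, key, zero_mul, add_zero]

lemma coeff_tanhS (n : ℕ) :
    PowerSeries.coeff n tanhS =
      ∑ i ∈ Finset.Icc 1 n, laa i * ((2:ℚ)^n * PowerSeries.coeff n (LB ^ i)) := by
  have hcc : constantCoeff (LA + 2) = 2 := by
    rw [map_add, constantCoeff_LA, zero_add]; exact map_ofNat _ 2
  have hcc' : constantCoeff (LA + 2) ≠ 0 := by rw [hcc]; norm_num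
  have hmul : (tanhS - LG n) * (LA + 2) = -(PowerSeries.C (laa n)) * LA ^ (n+1) := by
    rw [sub_mul, tanhS_mul, mul_comm (LG n), L_tele]
    ring
  have hf : tanhS - LG n = -(PowerSeries.C (laa n)) * LA ^ (n+1) * (LA + 2)⁻¹ := by
    have := congrArg (· * (LA + 2)⁻¹) hmul
    simpa [mul_assoc, PowerSeries.mul_inv_cancel _ hcc'] using this
  have hdvd : (PowerSeries.X : PowerSeries ℚ) ^ (n+1) ∣ tanhS - LG n := by
    rw [hf]
    exact Dvd.dvd.mul_right
      (Dvd.dvd.mul_left (pow_dvd_pow_of_dvd (PowerSeries.X_dvd_iff.2 constantCoeff_LA) _) _) _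
  have hz : PowerSeries.coeff n (tanhS - LG n) = 0 :=
    PowerSeries.X_pow_dvd_iff.1 hdvd n (Nat.lt_succ_self n)
  have hG : PowerSeries.coeff n tanhS = PowerSeries.coeff n (LG n) :=
    sub_eq_zero.1 (by rw [← map_sub]; exact hz)
  rw [hG, LG, map_sum]
  refine Finset.sum_congr rfl fun i _ => ?_
  rw [PowerSeries.coeff_C_mul, LA, ← map_pow, PowerSeries.coeff_rescale]

lemma sum_eq_coeff (n : ℕ) :
    ∑ i ∈ Finset.Icc 1 n, (-1 : ℚ) ^ (i - 1) * (i.factorial : ℚ) * (2 : ℚ) ^ (n - i) *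
        (stirling2 n i : ℚ) = (n.factorial : ℚ) * PowerSeries.coeff n tanhS := by
  rw [coeff_tanhS, Finset.mul_sum]
  refine Finset.sum_congr rfl fun i hi => ?_
  obtain ⟨hi1, hi2⟩ := Finset.mem_Icc.1 hi
  obtain ⟨j, rfl⟩ : ∃ j, i = j + 1 := ⟨i - 1, (Nat.succ_pred_eq_of_pos hi1).symm⟩
  have hB := coeff_LB_pow n (j+1)
  have h2n : (2:ℚ)^n = 2^(n-(j+1)) * 2^(j+1) := by
    rw [← pow_add, Nat.sub_add_cancel hi2]
  have haa : laa (j+1) * 2^(j+1) = (-1:ℚ)^j := by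
    rw [laa, neg_mul, ← mul_pow]
    norm_num
    rw [pow_succ]
    ring
  rw [h2n, Nat.add_sub_cancel]
  calc (-1 : ℚ) ^ j * ((j+1).factorial : ℚ) * (2 : ℚ) ^ (n - (j+1)) * (stirling2 n (j+1) : ℚ)
      = (-1:ℚ)^j * 2^(n-(j+1)) * ((stirling2 n (j+1) : ℚ) * ((j+1).factorial : ℚ)) := by ring
    _ = laa (j+1) * 2^(j+1) * 2^(n-(j+1)) *
        ((n.factorial : ℚ) * PowerSeries.coeff n (LB ^ (j+1))) := by rw [haa, hB]
    _ = (n.factorial : ℚ) *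
        (laa (j+1) * (2^(n-(j+1)) * 2^(j+1) * PowerSeries.coeff n (LB ^ (j+1)))) := by ring

lemma coeff_tanhS_even (n : ℕ) (hn : Even n) : PowerSeries.coeff n tanhS = 0 := by
  have h1 : PowerSeries.coeff n (PowerSeries.rescale (-1 : ℚ) tanhS) =
      PowerSeries.coeff n tanhS := by
    rw [PowerSeries.coeff_rescale, hn.neg_one_pow, one_mul]
  rw [tanhS_odd, map_neg] at h1
  linarith [h1]

/-- For odd n ≥ 1, ∑_{i=1}^{n} (-1)^{i-1} i! 2^{n-i} S(n,i) = (-1)^{(n-1)/2} T_n;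
for even n ≥ 2 the same sum vanishes. -/
theorem lengyel_type_identity (n : ℕ) (hn : 1 ≤ n) :
    (Odd n →
      ∑ i ∈ Finset.Icc 1 n, (-1 : ℚ) ^ (i - 1) * (i.factorial : ℚ) * (2 : ℚ) ^ (n - i) *
        (stirling2 n i : ℚ) = (-1 : ℚ) ^ ((n - 1) / 2) * tangentNumber n) ∧
    (Even n →
      ∑ i ∈ Finset.Icc 1 n, (-1 : ℚ) ^ (i - 1) * (i.factorial : ℚ) * (2 : ℚ) ^ (n - i) *
        (stirling2 n i : ℚ) = 0) := by
  have hsum := sum_eq_coeff n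
  have hTheta : ThetaT n 1 = (n.factorial : ℚ) * PowerSeries.coeff n tanhS := by
    simp [ThetaT, Nat.factorial_one]
  constructor
  · intro _
    rw [tangentNumber, ← mul_assoc, ← pow_add,
      Even.neg_one_pow ⟨(n-1)/2, rfl⟩, one_mul, hTheta]
    exact hsum
  · intro hev
    rw [hsum, coeff_tanhS_even n hev, mul_zero]
end
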